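/- For every prime p > 3, the sum over k from 0 to p-1 of binom(6k,3k)*binom(3k,k) / 432^k is congruent to (-1)^((p-1)/2) modulo p^2. -/

import Mathlib

open Finset Polynomial

lemma keyE (n : ℕ) :
    ∑ k ∈ Finset.range (n+1), (-1:ℤ)^k * (n.choose k) * ((n+k).choose k) = (-1)^n := by
  have step1 : ∀ k ∈ Finset.range (n+1),
      (-1:ℤ)^k * (n.choose k) * ((n+k).choose k)
        = ∑ i ∈ Finset.range (n+1), (-1:ℤ)^k * (n.choose k) * (n.choose i * k.choose i) := by
    intro k hk
    simp only [Finset.mem_range] at hk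
    rw [Nat.add_choose_eq, Finset.Nat.sum_antidiagonal_eq_sum_range_succ_mk]
    push_cast
    rw [Finset.mul_sum]
    symm
    rw [← Finset.sum_subset (Finset.range_subset_range.2 (by omega : k+1 ≤ n+1))]
    · refine Finset.sum_congr rfl fun i hi => ?_
      simp only [Finset.mem_range] at hi
      rw [Nat.choose_symm (by omega : i ≤ k)]
    · intro i _ hi
      simp only [Finset.mem_range, not_lt] at hi
      simp [Nat.choose_eq_zero_of_lt (by omega : k < i)]
  rw [Finset.sum_congr rfl step1, Finset.sum_comm]
  have inner : ∀ i ∈ Finset.range (n+1),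
      (∑ k ∈ Finset.range (n+1), (-1:ℤ)^k * (n.choose k) * (n.choose i * k.choose i))
        = (n.choose i : ℤ) * n.choose i * (-1)^i * (if n - i = 0 then 1 else 0) := by
    intro i hi
    simp only [Finset.mem_range] at hi
    rw [Finset.range_eq_Ico,
      ← Finset.sum_subset (Finset.Ico_subset_Ico (Nat.zero_le i) (le_refl (n+1)))
        (by intro k hk hk2
            simp only [Finset.mem_Ico] at hk hk2
            have : k < i := by omega
            simp [Nat.choose_eq_zero_of_lt this]),
      Finset.sum_Ico_eq_sum_range]
    have hni : n + 1 - i = (n - i) + 1 := by omega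
    rw [hni]
    have terms : ∀ d ∈ Finset.range ((n-i)+1),
        (-1:ℤ)^(i+d) * (n.choose (i+d)) * (n.choose i * (i+d).choose i)
          = ((n.choose i : ℤ) * n.choose i * (-1)^i) * ((-1)^d * ((n-i).choose d)) := by
      intro d hd
      simp only [Finset.mem_range] at hd
      have h1 : n.choose (i+d) * (i+d).choose i = n.choose i * (n-i).choose d := by
        have := Nat.choose_mul (n := n) (k := i + d) (s := i) (by omega)
        simpa using this
      have h1' : (n.choose (i+d) : ℤ) * (i+d).choose i = (n.choose i : ℤ) * (n-i).choose d := by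
        exact_mod_cast congrArg (Nat.cast : ℕ → ℤ) h1
      calc (-1:ℤ)^(i+d) * (n.choose (i+d)) * (n.choose i * (i+d).choose i)
          = ((-1:ℤ)^i * (-1)^d) * (n.choose i) * ((n.choose (i+d)) * ((i+d).choose i)) := by
            rw [pow_add]; ring
        _ = ((-1:ℤ)^i * (-1)^d) * (n.choose i) * ((n.choose i : ℤ) * (n-i).choose d) := by
            rw [h1']
        _ = ((n.choose i : ℤ) * n.choose i * (-1)^i) * ((-1)^d * ((n-i).choose d)) := by ring
    rw [Finset.sum_congr rfl terms, ← Finset.mul_sum, Int.alternating_sum_range_choose]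
  rw [Finset.sum_congr rfl inner]
  rw [Finset.sum_eq_single n]
  · simp
  · intro i hi hne
    simp only [Finset.mem_range] at hi
    rw [if_neg (by omega), mul_zero]
  · intro h
    exact absurd (Finset.self_mem_range_succ n) h


lemma pow_taylor (y t : ℤ) : ∀ n : ℕ, t^2 ∣ (y+t)^n - y^n - n * y^(n-1) * t
  | 0 => by norm_num
  | 1 => by norm_num
  | (n+2) => by
      obtain ⟨c, hc⟩ := pow_taylor y t (n+1)
      simp only [Nat.add_sub_cancel] at hc
      refine ⟨y*c + (n+1) * y^n + t*c, ?_⟩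
      push_cast at hc ⊢
      linear_combination (y+t) * hc

lemma poly_taylor (P : Polynomial ℤ) (y t : ℤ) :
    t^2 ∣ P.eval (y+t) - P.eval y - (P.derivative.eval y) * t := by
  induction P using Polynomial.induction_on' with
  | add p q hp hq =>
      simp only [Polynomial.eval_add, Polynomial.derivative_add]
      convert dvd_add hp hq using 1
      · rfl
      · ring
  | monomial n a =>
      simp only [Polynomial.eval_monomial, Polynomial.derivative_monomial, Polynomial.eval_mul,
        Polynomial.eval_natCast]
      obtain ⟨c, hc⟩ := pow_taylor y t n
      exact ⟨a * c, by linear_combination a * hc⟩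

lemma diff_lemma (P : Polynomial ℤ) (y s q : ℤ) :
    q^2 ∣ P.eval (y + q*s) - P.eval y - s*(P.eval (y+q) - P.eval y) := by
  obtain ⟨c1, h1⟩ := poly_taylor P y (q*s)
  obtain ⟨c2, h2⟩ := poly_taylor P y q
  exact ⟨s^2*c1 - s*c2, by linear_combination h1 - s * h2⟩


section
variable (p : ℕ)

noncomputable def dk (k : ℕ) : ℕ := ∏ i ∈ Finset.Ico (k+1) p, i

noncomputable def Qp : Polynomial ℤ :=
  ∑ k ∈ Finset.range p, Polynomial.C ((-1:ℤ)^k * (dk p k)^2) *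
    ((∏ j ∈ Finset.range k, (Polynomial.X - Polynomial.C (j:ℤ))) *
     (∏ j ∈ Finset.range k, (Polynomial.X + Polynomial.C ((j:ℤ)+1))))

lemma hdk {k : ℕ} (hk : k < p) : k.factorial * dk p k = (p-1).factorial := by
  have h1 : (k.factorial : ℕ) = ∏ i ∈ Finset.Ico 1 (k+1), i := by
    rw [Finset.prod_Ico_id_eq_factorial]
  rw [h1, dk, Finset.prod_Ico_consecutive _ (by omega : 1 ≤ k+1) (by omega : k+1 ≤ p)]
  rw [show p = (p-1)+1 by omega, Finset.prod_Ico_id_eq_factorial]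
  rw [show p - 1 + 1 - 1 = p - 1 by omega]

lemma evalQp (t : ℤ) : (Qp p).eval t =
    ∑ k ∈ Finset.range p, (-1:ℤ)^k * (dk p k)^2 *
      ((∏ j ∈ Finset.range k, (t - j)) * (∏ j ∈ Finset.range k, (t + (j+1)))) := by
  rw [Qp, Polynomial.eval_finset_sum]
  refine Finset.sum_congr rfl fun k _ => ?_
  simp [Polynomial.eval_prod]

lemma prod_desc (n k : ℕ) :
    ∏ j ∈ Finset.range k, ((n:ℤ) - j) = (k.factorial * n.choose k : ℕ) := by
  rcases le_or_gt k n with h | h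
  · rw [← Nat.descFactorial_eq_factorial_mul_choose, Nat.descFactorial_eq_prod_range]
    push_cast
    refine Finset.prod_congr rfl fun i hi => ?_
    simp only [Finset.mem_range] at hi
    rw [Nat.cast_sub (by omega)]
  · rw [Nat.choose_eq_zero_of_lt h, Nat.mul_zero, Nat.cast_zero]
    exact Finset.prod_eq_zero (Finset.mem_range.2 h) (by ring)

lemma prod_asc (n k : ℕ) :
    ∏ j ∈ Finset.range k, ((n:ℤ) + (j+1)) = (k.factorial * (n+k).choose k : ℕ) := by
  have h1 : n.factorial * ((n+1).ascFactorial k) = n.factorial * (k.factorial * (n+k).choose k) := by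
    rw [Nat.factorial_mul_ascFactorial]
    rw [← Nat.add_choose_mul_factorial_mul_factorial n k]
    ring
  have h2 : (n+1).ascFactorial k = k.factorial * (n+k).choose k :=
    Nat.eq_of_mul_eq_mul_left n.factorial_pos h1
  rw [← h2]
  clear h1 h2
  induction k with
  | zero => simp
  | succ k ih =>
      rw [Finset.prod_range_succ, ih, Nat.ascFactorial_succ]
      push_cast
      ring

end

section
variable (p : ℕ)

lemma evalQp_nat (n : ℕ) : (Qp p).eval (n:ℤ) =
    ((p-1).factorial:ℤ)^2 * ∑ k ∈ Finset.range p, (-1:ℤ)^k * n.choose k * (n+k).choose k := by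
  rw [evalQp, Finset.mul_sum]
  refine Finset.sum_congr rfl fun k hk => ?_
  simp only [Finset.mem_range] at hk
  rw [prod_desc, prod_asc, ← hdk p hk]
  push_cast
  ring

lemma evalQp_small {n : ℕ} (hn : n < p) :
    (Qp p).eval (n:ℤ) = (-1)^n * ((p-1).factorial:ℤ)^2 := by
  rw [evalQp_nat]
  rw [← Finset.sum_subset (Finset.range_subset_range.2 (by omega : n+1 ≤ p))
    (by intro k _ hk2
        simp only [Finset.mem_range, not_lt] at hk2
        simp [Nat.choose_eq_zero_of_lt (by omega : n < k)])]
  rw [keyE]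
  ring

lemma evalQp_sym (t : ℤ) : (Qp p).eval (-1 - t) = (Qp p).eval t := by
  rw [evalQp, evalQp]
  refine Finset.sum_congr rfl fun k _ => ?_
  have h3 : ((-1:ℤ))^k * (-1)^k = 1 := by
    rw [← pow_add]
    exact Even.neg_one_pow ⟨k, rfl⟩
  have h1 : ∏ j ∈ Finset.range k, (-1 - t - (j:ℤ)) = (-1)^k * ∏ j ∈ Finset.range k, (t+((j:ℤ)+1)) := by
    rw [show ∏ j ∈ Finset.range k, (-1 - t - (j:ℤ)) = ∏ j ∈ Finset.range k, ((-1) * (t+((j:ℤ)+1)))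
      from Finset.prod_congr rfl fun j _ => by ring,
      Finset.prod_mul_distrib, Finset.prod_const, Finset.card_range]
  have h2 : ∏ j ∈ Finset.range k, (-1 - t + ((j:ℤ)+1)) = (-1)^k * ∏ j ∈ Finset.range k, (t-(j:ℤ)) := by
    rw [show ∏ j ∈ Finset.range k, (-1 - t + ((j:ℤ)+1)) = ∏ j ∈ Finset.range k, ((-1) * (t-(j:ℤ)))
      from Finset.prod_congr rfl fun j _ => by ring,
      Finset.prod_mul_distrib, Finset.prod_const, Finset.card_range]
  rw [h1, h2]
  calc (-1:ℤ)^k * (dk p k)^2 * (((-1)^k * ∏ j ∈ Finset.range k, (t+((j:ℤ)+1))) * ((-1)^k * ∏ j ∈ Finset.range k, (t-(j:ℤ))))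
      = ((-1:ℤ)^k * (-1)^k) * ((-1)^k * (dk p k)^2 * ((∏ j ∈ Finset.range k, (t-(j:ℤ))) * (∏ j ∈ Finset.range k, (t+((j:ℤ)+1))))) := by ring
    _ = _ := by rw [h3, one_mul]

lemma Qp_cong (hp : 2 ≤ p) (hodd : p % 2 = 1) (a : ℕ) :
    (p:ℤ)^2 ∣ (Qp p).eval (a:ℤ) - (-1)^(a % p) * ((p-1).factorial:ℤ)^2 := by
  set a0 := a % p with ha0
  set m := a / p with hm
  have hp0 : 0 < p := by omega
  have ha0lt : a0 < p := Nat.mod_lt _ hp0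
  have h1 : (a0:ℤ) + (p:ℤ) * (m:ℤ) = (a:ℤ) := by
    exact_mod_cast congrArg (Nat.cast : ℕ → ℤ) (Nat.mod_add_div a p)
  have d2 := diff_lemma (Qp p) (a0:ℤ) (m:ℤ) (p:ℤ)
  rw [h1] at d2
  have d1 := diff_lemma (Qp p) (a0:ℤ) (-1) (p:ℤ)
  rw [show (a0:ℤ) + (p:ℤ)*(-1) = (a0:ℤ) - p by ring] at d1
  have hs : (Qp p).eval ((a0:ℤ) - p) = (Qp p).eval (((p-1-a0 : ℕ)):ℤ) := by
    rw [← evalQp_sym p ((a0:ℤ) - p)]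
    congr 1
    push_cast [Nat.cast_sub (by omega : a0 ≤ p - 1), Nat.cast_sub (by omega : 1 ≤ p)]
    ring
  have hQ0 : (Qp p).eval (a0:ℤ) = (-1)^a0 * ((p-1).factorial:ℤ)^2 := evalQp_small p ha0lt
  have hQ1 : (Qp p).eval (((p-1-a0:ℕ)):ℤ) = (-1)^a0 * ((p-1).factorial:ℤ)^2 := by
    rw [evalQp_small p (by omega : p-1-a0 < p)]
    congr 1
    rw [neg_one_pow_eq_pow_mod_two, neg_one_pow_eq_pow_mod_two (n := a0)]
    congr 1
    omega
  rw [hs, hQ1, hQ0] at d1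
  rw [hQ0] at d2
  obtain ⟨c1, e1⟩ := d1
  obtain ⟨c2, e2⟩ := d2
  exact ⟨c2 + (m:ℤ) * c1, by linear_combination e2 + (m:ℤ) * e1⟩

end


lemma fact_expand (n : ℕ) : (n+6).factorial = (n+6)*(n+5)*(n+4)*(n+3)*(n+2)*(n+1)*n.factorial := by
  simp [show n+6 = (n+5)+1 by omega, show n+5 = (n+4)+1 by omega, show n+4 = (n+3)+1 by omega,
    show n+3 = (n+2)+1 by omega, show n+2 = (n+1)+1 by omega, Nat.factorial_succ]
  ring

lemma fact1 : ∀ k : ℕ, (6*k).factorial * k.factorial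
    = (3*k).factorial * (2*k).factorial * 12^k * ∏ j ∈ Finset.range k, ((6*j+1)*(6*j+5))
  | 0 => by simp
  | (k+1) => by
    have ih := fact1 k
    rw [show 6*(k+1) = 6*k+6 by ring, show 3*(k+1) = 3*k+3 by ring, show 2*(k+1) = 2*k+2 by ring,
      Finset.prod_range_succ, fact_expand (6*k), Nat.factorial_succ k,
      show (3*k+3) = (3*k+2)+1 by omega, Nat.factorial_succ,
      show (3*k+2) = (3*k+1)+1 by omega, Nat.factorial_succ,
      show (3*k+1) = (3*k)+1 by omega, Nat.factorial_succ,
      show (2*k+2) = (2*k+1)+1 by omega, Nat.factorial_succ,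
      show (2*k+1) = (2*k)+1 by omega, Nat.factorial_succ]
    calc (6*k+6)*(6*k+5)*(6*k+4)*(6*k+3)*(6*k+2)*(6*k+1)*(6*k).factorial * ((k+1) * k.factorial)
        = ((6*k).factorial * k.factorial) * ((6*k+6)*(6*k+5)*(6*k+4)*(6*k+3)*(6*k+2)*(6*k+1)*(k+1)) := by ring
      _ = ((3*k).factorial * (2*k).factorial * 12^k * ∏ j ∈ Finset.range k, ((6*j+1)*(6*j+5)))
            * ((6*k+6)*(6*k+5)*(6*k+4)*(6*k+3)*(6*k+2)*(6*k+1)*(k+1)) := by rw [ih]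
      _ = _ := by ring

lemma fact2 (k : ℕ) : (6*k).choose (3*k) * (3*k).choose k * (k.factorial * k.factorial)
    = 12^k * ∏ j ∈ Finset.range k, ((6*j+1)*(6*j+5)) := by
  have e1 : (6*k).choose (3*k) * (3*k).factorial * (3*k).factorial = (6*k).factorial := by
    have := Nat.choose_mul_factorial_mul_factorial (show 3*k ≤ 6*k by omega)
    rwa [show 6*k - 3*k = 3*k by omega] at this
  have e2 : (3*k).choose k * k.factorial * (2*k).factorial = (3*k).factorial := by
    have := Nat.choose_mul_factorial_mul_factorial (show k ≤ 3*k by omega)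
    rwa [show 3*k - k = 2*k by omega] at this
  have key : ((6*k).choose (3*k) * (3*k).choose k * (k.factorial * k.factorial))
        * ((3*k).factorial * (2*k).factorial)
      = (12^k * ∏ j ∈ Finset.range k, ((6*j+1)*(6*j+5))) * ((3*k).factorial * (2*k).factorial) := by
    calc ((6*k).choose (3*k) * (3*k).choose k * (k.factorial * k.factorial)) * ((3*k).factorial * (2*k).factorial)
        = ((3*k).choose k * k.factorial * (2*k).factorial) * ((6*k).choose (3*k) * (3*k).factorial * k.factorial) := by ring
      _ = (3*k).factorial * ((6*k).choose (3*k) * (3*k).factorial * k.factorial) := by rw [e2]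
      _ = ((6*k).choose (3*k) * (3*k).factorial * (3*k).factorial) * k.factorial := by ring
      _ = (6*k).factorial * k.factorial := by rw [e1]
      _ = ((3*k).factorial * (2*k).factorial * 12^k * ∏ j ∈ Finset.range k, ((6*j+1)*(6*j+5))) := fact1 k
      _ = _ := by ring
  exact Nat.eq_of_mul_eq_mul_right (by positivity) key

theorem rodriguez_villegas_432 (p : ℕ) (hp : p.Prime) (hp3 : 3 < p) :
    (∑ k ∈ Finset.range p,
      ((Nat.choose (6 * k) (3 * k) : ZMod (p ^ 2)) * (Nat.choose (3 * k) k : ZMod (p ^ 2)) *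
        ((432 : ZMod (p ^ 2))⁻¹) ^ k))
      = (-1) ^ ((p - 1) / 2) := by
  have hp2 : p % 2 = 1 := by
    rcases Nat.mod_two_eq_zero_or_one p with h | h
    · exfalso
      rcases hp.eq_one_or_self_of_dvd 2 (by omega) with h' | h' <;> omega
    · exact h
  have hp3' : p % 3 ≠ 0 := by
    intro h
    rcases hp.eq_one_or_self_of_dvd 3 (by omega) with h' | h' <;> omega
  set a : ℕ := (p^2-1)/6 with ha_def
  obtain ⟨h6a, hsign⟩ : 6 * a = p^2 - 1 ∧ ((-1:ZMod (p^2))^(a % p) = (-1)^((p-1)/2)) := by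
    have hp6 : p % 6 = 1 ∨ p % 6 = 5 := by omega
    rcases hp6 with h | h
    · have hpt : p = 6*(p/6)+1 := by omega
      set t := p / 6 with ht
      have hsq : p^2 = (6*t^2+2*t)*6 + 1 := by rw [hpt]; ring
      have ha : a = 6*t^2+2*t := by
        rw [ha_def, hsq, Nat.add_sub_cancel, Nat.mul_div_cancel _ (by norm_num)]
      have hmod : a % p = t := by
        rw [ha, hpt, show 6*t^2+2*t = t + (6*t+1)*t by ring, Nat.add_mul_mod_self_left,
          Nat.mod_eq_of_lt (by omega)]
      refine ⟨by rw [ha, hsq, Nat.add_sub_cancel]; ring, ?_⟩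
      rw [hmod, show (p-1)/2 = 3*t by omega, pow_mul]
      norm_num
    · have hpt : p = 6*(p/6)+5 := by omega
      set t := p / 6 with ht
      have hsq : p^2 = (6*t^2+10*t+4)*6 + 1 := by rw [hpt]; ring
      have ha : a = 6*t^2+10*t+4 := by
        rw [ha_def, hsq, Nat.add_sub_cancel, Nat.mul_div_cancel _ (by norm_num)]
      have hmod : a % p = 5*t+4 := by
        rw [ha, hpt, show 6*t^2+10*t+4 = (5*t+4) + (6*t+5)*t by ring, Nat.add_mul_mod_self_left,
          Nat.mod_eq_of_lt (by omega)]
      refine ⟨by rw [ha, hsq, Nat.add_sub_cancel]; ring, ?_⟩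
      rw [hmod, show (p-1)/2 = 3*t+2 by omega, pow_add, pow_add, pow_mul, pow_mul]
      norm_num
  have hNu : IsUnit (((p-1).factorial : ZMod (p^2))) := by
    rw [ZMod.isUnit_iff_coprime]
    refine Nat.Coprime.pow_right 2 (Nat.coprime_comm.mp (hp.coprime_iff_not_dvd.mpr (fun hd => ?_)))
    have := (Nat.Prime.dvd_factorial hp).mp hd
    omega
  have h432u : IsUnit ((432 : ZMod (p^2))) := by
    have hc : ((432:ℕ) : ZMod (p^2)) = (432 : ZMod (p^2)) := by norm_cast
    rw [← hc, ZMod.isUnit_iff_coprime]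
    refine Nat.Coprime.pow_right 2 (Nat.coprime_comm.mp (hp.coprime_iff_not_dvd.mpr (fun hd => ?_)))
    have h2 : p ∣ 16 * 27 := by rw [show (16*27:ℕ) = 432 by norm_num]; exact hd
    rcases (Nat.Prime.dvd_mul hp).mp h2 with h | h
    · have := Nat.le_of_dvd (by norm_num) (hp.dvd_of_dvd_pow (n := 4) (show p ∣ 2^4 by rw [show (2^4:ℕ) = 16 by norm_num]; exact h))
      omega
    · have := Nat.le_of_dvd (by norm_num) (hp.dvd_of_dvd_pow (n := 3) (show p ∣ 3^3 by rw [show (3^3:ℕ) = 27 by norm_num]; exact h))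
      omega
  have hinv : (432 : ZMod (p^2)) * (432 : ZMod (p^2))⁻¹ = 1 := ZMod.mul_inv_of_unit _ h432u
  have h6aR : (6 : ZMod (p^2)) * ((a : ℕ) : ZMod (p^2)) = -1 := by
    calc (6 : ZMod (p^2)) * ((a:ℕ) : ZMod (p^2)) = ((6*a : ℕ) : ZMod (p^2)) := by push_cast; ring
      _ = ((p^2-1 : ℕ) : ZMod (p^2)) := by rw [h6a]
      _ = ((p^2 : ℕ) : ZMod (p^2)) - 1 := by
            rw [Nat.cast_sub (by nlinarith [hp.two_le])]
            push_cast
            ring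
      _ = -1 := by rw [ZMod.natCast_self]; ring
  have hfac : ∀ j : ℕ, (12 : ZMod (p^2)) * (432 : ZMod (p^2))⁻¹ * (((6*j+1)*(6*j+5) : ℕ) : ZMod (p^2))
      = (-1) * (((a:ℕ) : ZMod (p^2)) - (j:ℕ)) * (((a:ℕ) : ZMod (p^2)) + ((j:ℕ)+1)) := by
    intro j
    apply h432u.mul_left_cancel
    calc (432 : ZMod (p^2)) * ((12 : ZMod (p^2)) * (432 : ZMod (p^2))⁻¹ * (((6*j+1)*(6*j+5) : ℕ) : ZMod (p^2)))
        = (12 : ZMod (p^2)) * (((6*j+1)*(6*j+5) : ℕ) : ZMod (p^2)) * ((432 : ZMod (p^2)) * (432 : ZMod (p^2))⁻¹) := by ring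
      _ = (12 : ZMod (p^2)) * (((6*j+1)*(6*j+5) : ℕ) : ZMod (p^2)) := by rw [hinv, mul_one]
      _ = (432 : ZMod (p^2)) * ((-1) * (((a:ℕ) : ZMod (p^2)) - (j:ℕ)) * (((a:ℕ) : ZMod (p^2)) + ((j:ℕ)+1))) := by
          push_cast
          linear_combination (12*(6*((a:ℕ) : ZMod (p^2))+5) - 72*(((a:ℕ):ZMod (p^2)) + (j:ℕ) + 1)*6 + 432*(((a:ℕ):ZMod (p^2)) + (j:ℕ) + 1)) * h6aR
  have hterm : ∀ k ∈ Finset.range p,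
      (((p-1).factorial : ZMod (p^2)))^2 *
        ((Nat.choose (6*k) (3*k) : ZMod (p^2)) * (Nat.choose (3*k) k : ZMod (p^2)) * ((432 : ZMod (p^2))⁻¹)^k)
      = ((((-1:ℤ)^k * ((dk p k : ℕ):ℤ)^2 *
          ((∏ j ∈ Finset.range k, (((a:ℕ):ℤ) - (j:ℕ))) * (∏ j ∈ Finset.range k, (((a:ℕ):ℤ) + ((j:ℕ)+1))))) : ℤ) : ZMod (p^2)) := by
    intro k hk
    simp only [Finset.mem_range] at hk
    have hN2 : ((p-1).factorial)^2 * ((6*k).choose (3*k) * (3*k).choose k)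
        = (dk p k)^2 * (12^k * ∏ j ∈ Finset.range k, ((6*j+1)*(6*j+5))) := by
      rw [← hdk p hk]
      calc (k.factorial * dk p k)^2 * ((6*k).choose (3*k) * (3*k).choose k)
          = ((6*k).choose (3*k) * (3*k).choose k * (k.factorial * k.factorial)) * (dk p k)^2 := by ring
        _ = (12^k * ∏ j ∈ Finset.range k, ((6*j+1)*(6*j+5))) * (dk p k)^2 := by rw [fact2]
        _ = _ := by ring
    have hN2' : (((p-1).factorial : ZMod (p^2)))^2 * ((6*k).choose (3*k) : ZMod (p^2)) * ((3*k).choose k : ZMod (p^2))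
        = ((dk p k : ℕ) : ZMod (p^2))^2 * ((12^k * ∏ j ∈ Finset.range k, ((6*j+1)*(6*j+5)) : ℕ) : ZMod (p^2)) := by
      have := congrArg (Nat.cast : ℕ → ZMod (p^2)) hN2
      push_cast at this
      push_cast
      linear_combination this
    calc (((p-1).factorial : ZMod (p^2)))^2 *
        ((Nat.choose (6*k) (3*k) : ZMod (p^2)) * (Nat.choose (3*k) k : ZMod (p^2)) * ((432 : ZMod (p^2))⁻¹)^k)
        = (((p-1).factorial : ZMod (p^2))^2 * ((6*k).choose (3*k) : ZMod (p^2)) * ((3*k).choose k : ZMod (p^2))) * ((432 : ZMod (p^2))⁻¹)^k := by ring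
      _ = ((dk p k : ℕ) : ZMod (p^2))^2 * (((12^k * ∏ j ∈ Finset.range k, ((6*j+1)*(6*j+5)) : ℕ) : ZMod (p^2)) * ((432 : ZMod (p^2))⁻¹)^k) := by rw [hN2']; ring
      _ = ((dk p k:ℕ) : ZMod (p^2))^2 * ∏ j ∈ Finset.range k, ((12 : ZMod (p^2)) * (432 : ZMod (p^2))⁻¹ * (((6*j+1)*(6*j+5) : ℕ) : ZMod (p^2))) := by
            congr 1
            push_cast
            simp only [Finset.prod_mul_distrib, Finset.prod_const, Finset.card_range]
            ring
      _ = ((dk p k:ℕ) : ZMod (p^2))^2 * ∏ j ∈ Finset.range k, ((-1) * (((a:ℕ) : ZMod (p^2)) - (j:ℕ)) * (((a:ℕ) : ZMod (p^2)) + ((j:ℕ)+1))) := by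
            rw [Finset.prod_congr rfl (fun j _ => hfac j)]
      _ = _ := by
            push_cast
            simp only [Finset.prod_mul_distrib, Finset.prod_const, Finset.card_range]
            ring
  have hsum : (((p-1).factorial : ZMod (p^2)))^2 * (∑ k ∈ Finset.range p,
      ((Nat.choose (6 * k) (3 * k) : ZMod (p ^ 2)) * (Nat.choose (3 * k) k : ZMod (p ^ 2)) *
        ((432 : ZMod (p ^ 2))⁻¹) ^ k))
      = (((Qp p).eval ((a:ℕ):ℤ) : ℤ) : ZMod (p^2)) := by
    rw [Finset.mul_sum, evalQp, Int.cast_sum]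
    exact Finset.sum_congr rfl hterm
  have hc := Qp_cong p hp.two_le hp2 a
  have hc' : (((Qp p).eval ((a:ℕ):ℤ) : ℤ) : ZMod (p^2))
      = (-1 : ZMod (p^2))^(a % p) * ((p-1).factorial : ZMod (p^2))^2 := by
    have h0 : ((((Qp p).eval ((a:ℕ):ℤ) - (-1)^(a % p) * ((p-1).factorial:ℤ)^2) : ℤ) : ZMod (p^2)) = 0 := by
      rw [ZMod.intCast_zmod_eq_zero_iff_dvd]
      exact_mod_cast hc
    push_cast at h0
    linear_combination h0
  have hfin := hsum.trans hc'
  have hS := (hNu.pow 2).mul_left_cancel (a := ((p-1).factorial : ZMod (p^2))^2)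
    (b := (∑ k ∈ Finset.range p,
      ((Nat.choose (6 * k) (3 * k) : ZMod (p ^ 2)) * (Nat.choose (3 * k) k : ZMod (p ^ 2)) *
        ((432 : ZMod (p ^ 2))⁻¹) ^ k)))
    (c := (-1 : ZMod (p^2))^(a % p)) (by rw [hfin]; ring)
  rw [hS, hsign]
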